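/- Let (Xₙ)ₙ≥₀ be a sequence of positive reals tending to infinity and (sₙ)ₙ≥₁ a sequence of positive integers such that for some c ≥ 1 and all n ≥ 1, c^{-s_{n+1}} Xₙ^{s_{n+1}} X_{n-1} ≤ X_{n+1} ≤ c^{s_{n+1}} Xₙ^{s_{n+1}} X_{n-1}. Then the sequence (log Xₙ)ₙ is strictly increasing for n sufficiently large. -/
import Mathlib


open Filter

theorem stmt5 (X : ℕ → ℝ) (hX : ∀ n, 0 < X n)
    (hlim : Tendsto X atTop atTop)
    (s : ℕ → ℕ) (hs : ∀ n, 1 ≤ n → 0 < s n) (c : ℝ) (hc : 1 ≤ c)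
    (hrec : ∀ n, 1 ≤ n →
      (c ^ s (n + 1))⁻¹ * X n ^ s (n + 1) * X (n - 1) ≤ X (n + 1) ∧
      X (n + 1) ≤ c ^ s (n + 1) * X n ^ s (n + 1) * X (n - 1)) :
    ∃ N : ℕ, ∀ n, N ≤ n → Real.log (X n) < Real.log (X (n + 1)) := by
  obtain ⟨N, hN⟩ := (hlim.eventually_ge_atTop (c + 1)).exists_forall_of_atTop
  refine ⟨N + 1, fun n hn => ?_⟩
  have hn1 : 1 ≤ n := le_trans (Nat.le_add_left 1 N) hn
  have hXn : c + 1 ≤ X n := hN n (le_trans (Nat.le_succ N) hn)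
  have hXn1 : c + 1 ≤ X (n - 1) := hN (n - 1) (by omega)
  have hc0 : 0 < c := lt_of_lt_of_le one_pos hc
  set t : ℝ := X n / c with ht
  have ht1 : 1 < t := (one_lt_div hc0).2 (by linarith)
  have hsn := hs (n + 1) (by omega)
  have hts : t ≤ t ^ s (n + 1) := le_self_pow₀ ht1.le (by omega)
  have key : X n < X (n + 1) := by
    have h1 := (hrec n hn1).1
    have h2 : (c ^ s (n + 1))⁻¹ * X n ^ s (n + 1) = t ^ s (n + 1) := by
      rw [ht, div_pow, div_eq_inv_mul]
    rw [h2] at h1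
    have h3 : t * c < t ^ s (n + 1) * X (n - 1) := by
      have := mul_le_mul hts hXn1 (by linarith) (by positivity)
      nlinarith
    have : t * c = X n := div_mul_cancel₀ _ hc0.ne'
    linarith
  exact Real.log_lt_log (hX n) key
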